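/- The Hugoniot curve through a point (t₀, z₀, 0) of the characteristic surface intersects the plane Y = 0 exactly at z = z₀ and z = z₁ := -(t₀(1+z₀²) - z₀)/(t₀z₀(1+z₀²) + 1), and z₀ = z₁ if and only if t₀ = 0. That is, the numerator of the Y-component of the Hugoniot curve through (t₀, z₀, 0), namely -2c(z - z₀)((t₀z₀(1+z₀²)+1)z + (t₀(1+z₀²) - z₀)), vanishes exactly at these two roots, which coincide iff t₀ = 0. -/

import Mathlib

/-- The Hugoniot curve through a characteristic point `(t₀, z₀, 0)` meets the
plane `Y = 0` exactly at `z = z₀` and `z = z₁`, and these coincide iff `t₀ = 0`. -/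
theorem stmt3 (b1 c t0 z0 : ℝ) (hb : 1 < b1) (hc : 0 < c)
    (hD : t0 * z0 * (1 + z0 ^ 2) + 1 ≠ 0) :
    let z1 := -(t0 * (1 + z0 ^ 2) - z0) / (t0 * z0 * (1 + z0 ^ 2) + 1)
    (∀ z : ℝ,
      -2 * c * (z - z0) * ((t0 * z0 * (1 + z0 ^ 2) + 1) * z + (t0 * (1 + z0 ^ 2) - z0)) = 0 ↔
        z = z0 ∨ z = z1) ∧
    (z0 = z1 ↔ t0 = 0) := by
  intro z1
  have hc' : c ≠ 0 := ne_of_gt hc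
  have hz1 : z1 * (t0 * z0 * (1 + z0 ^ 2) + 1) = -(t0 * (1 + z0 ^ 2) - z0) := by
    simp only [z1]
    exact div_mul_cancel₀ _ hD
  constructor
  · intro z
    constructor
    · intro h
      rcases mul_eq_zero.mp h with h1 | h2
      · rcases mul_eq_zero.mp h1 with h3 | h4
        · exfalso; revert h3; norm_num [hc']
        · left; linarith [sub_eq_zero.mp h4]
      · right
        have : (t0 * z0 * (1 + z0 ^ 2) + 1) * z = (t0 * z0 * (1 + z0 ^ 2) + 1) * z1 := by
          nlinarith [hz1]
        exact mul_left_cancel₀ hD this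
    · rintro (rfl | rfl)
      · ring
      · have h0 : (t0 * z0 * (1 + z0 ^ 2) + 1) * z1 + (t0 * (1 + z0 ^ 2) - z0) = 0 := by
          linarith [hz1, mul_comm z1 (t0 * z0 * (1 + z0 ^ 2) + 1)]
        rw [h0]; ring
  · constructor
    · intro h
      rw [← h] at hz1
      have h2 : t0 * (1 + z0 ^ 2) ^ 2 = 0 := by nlinarith [hz1]
      have : (1 + z0 ^ 2) ^ 2 ≠ 0 := by positivity
      exact (mul_eq_zero.mp h2).resolve_right this
    · intro h
      subst h
      simp only [z1]
      field_simp
      ring
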